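/- Let H₁ = (1,0,0,0), H₂ = (1, 3/7, −√3/7, 1/7), H₃ = (1, 3/7, √3/7, 1/7) in ℝ⁴, and for i ≠ j set d_{ij} = arccosh( −⟨H_i,H_j⟩ / √(⟨H_i,H_i⟩⟨H_j,H_j⟩) ) and L_{ij} = 2 sinh(d_{ij}/2). Then cosh d_{12} = cosh d_{13} = cosh d_{23} = 7/6, hence L_{12} = L_{13} = L_{23} = 1/√3, and the Euclidean area of a triangle with all three side lengths equal to 1/√3 is √3/12 = 1/(4√3). (Hence, by Bolyai's formula, the piece of the maximal horoball contained in the fundamental simplex of the Coxeter tiling [3,3^{[3]}] has hyperbolic volume (1/2)·(√3/12) = 1/(8√3).) -/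

import Mathlib

open Real

def lor (x y : Fin 4 → ℝ) : ℝ :=
  -(x 0 * y 0) + x 1 * y 1 + x 2 * y 2 + x 3 * y 3

noncomputable def arcosh' (x : ℝ) : ℝ := Real.log (x + Real.sqrt (x ^ 2 - 1))

noncomputable def heronArea (a b c : ℝ) : ℝ :=
  (1 / 4) * Real.sqrt ((a + b + c) * (-a + b + c) * (a - b + c) * (a + b - c))

lemma arcosh_nonneg {x : ℝ} (hx : 1 ≤ x) : 0 ≤ arcosh' x := by
  unfold arcosh'
  apply Real.log_nonneg
  have := Real.sqrt_nonneg (x ^ 2 - 1)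
  linarith

lemma cosh_arcosh {x : ℝ} (hx : 1 ≤ x) : Real.cosh (arcosh' x) = x := by
  unfold arcosh'
  have h1 : 0 ≤ x ^ 2 - 1 := by nlinarith
  have hs : Real.sqrt (x ^ 2 - 1) ^ 2 = x ^ 2 - 1 := Real.sq_sqrt h1
  have hsn : 0 ≤ Real.sqrt (x ^ 2 - 1) := Real.sqrt_nonneg _
  have hpos : 0 < x + Real.sqrt (x ^ 2 - 1) := by linarith
  rw [Real.cosh_eq, Real.exp_log hpos, Real.exp_neg, Real.exp_log hpos]
  field_simp
  nlinarith [hs]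

lemma sinh_half_arcosh {x : ℝ} (hx : 1 ≤ x) :
    Real.sinh (arcosh' x / 2) = Real.sqrt ((x - 1) / 2) := by
  have h0 : 0 ≤ arcosh' x / 2 := by linarith [_root_.arcosh_nonneg hx]
  have hs : 0 ≤ Real.sinh (arcosh' x / 2) := by
    rw [← Real.sinh_zero]; exact Real.sinh_le_sinh.mpr h0
  rw [show Real.sinh (arcosh' x / 2) = Real.sqrt (Real.sinh (arcosh' x / 2) ^ 2) from
    (Real.sqrt_sq hs).symm]
  congr 1
  have hc : Real.cosh (2 * (arcosh' x / 2)) =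
      Real.cosh (arcosh' x / 2) ^ 2 + Real.sinh (arcosh' x / 2) ^ 2 :=
    Real.cosh_two_mul _
  have h2 : (2 : ℝ) * (arcosh' x / 2) = arcosh' x := by ring
  rw [h2, _root_.cosh_arcosh hx] at hc
  have h3 : Real.cosh (arcosh' x / 2) ^ 2 = Real.sinh (arcosh' x / 2) ^ 2 + 1 :=
    Real.cosh_sq _
  nlinarith [hc, h3]

theorem horoball_piece_336 :
    let H₁ : Fin 4 → ℝ := ![1, 0, 0, 0]
    let H₂ : Fin 4 → ℝ := ![1, 3/7, -(Real.sqrt 3)/7, 1/7]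
    let H₃ : Fin 4 → ℝ := ![1, 3/7, Real.sqrt 3/7, 1/7]
    let d : (Fin 4 → ℝ) → (Fin 4 → ℝ) → ℝ := fun x y =>
      arcosh' (-(lor x y) / Real.sqrt (lor x x * lor y y))
    let L : (Fin 4 → ℝ) → (Fin 4 → ℝ) → ℝ := fun x y => 2 * Real.sinh (d x y / 2)
    (Real.cosh (d H₁ H₂) = 7/6 ∧ Real.cosh (d H₁ H₃) = 7/6 ∧
      Real.cosh (d H₂ H₃) = 7/6) ∧
    (L H₁ H₂ = 1 / Real.sqrt 3 ∧ L H₁ H₃ = 1 / Real.sqrt 3 ∧ L H₂ H₃ = 1 / Real.sqrt 3) ∧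
    heronArea (1 / Real.sqrt 3) (1 / Real.sqrt 3) (1 / Real.sqrt 3) = Real.sqrt 3 / 12 ∧
    Real.sqrt 3 / 12 = 1 / (4 * Real.sqrt 3) := by
  intro H₁ H₂ H₃ d L
  have s3 : Real.sqrt 3 ^ 2 = 3 := Real.sq_sqrt (by norm_num)
  have s3n : 0 ≤ Real.sqrt 3 := Real.sqrt_nonneg 3
  have s3p : 0 < Real.sqrt 3 := Real.sqrt_pos.mpr (by norm_num)
  have h11 : lor H₁ H₁ = -1 := by simp [lor, H₁]
  have h22 : lor H₂ H₂ = -(36/49) := by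
    simp only [lor, H₂]
    norm_num [Matrix.cons_val_zero, Matrix.cons_val_one, Matrix.head_cons]
    simp only [Matrix.cons_val]
    nlinarith [s3]
  have h33 : lor H₃ H₃ = -(36/49) := by
    simp only [lor, H₃]
    norm_num [Matrix.cons_val_zero, Matrix.cons_val_one, Matrix.head_cons]
    simp only [Matrix.cons_val]
    nlinarith [s3]
  have h12 : lor H₁ H₂ = -1 := by
    simp [lor, H₁, H₂]
  have h13 : lor H₁ H₃ = -1 := by
    simp [lor, H₁, H₃]
  have h23 : lor H₂ H₃ = -(6/7) := by
    simp only [lor, H₂, H₃]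
    norm_num [Matrix.cons_val_zero, Matrix.cons_val_one, Matrix.head_cons]
    simp only [Matrix.cons_val]
    nlinarith [s3]
  have key12 : -(lor H₁ H₂) / Real.sqrt (lor H₁ H₁ * lor H₂ H₂) = 7/6 := by
    rw [h12, h11, h22]
    rw [show (-1 : ℝ) * -(36/49) = (6/7)^2 by norm_num,
      Real.sqrt_sq (by norm_num : (0:ℝ) ≤ 6/7)]
    norm_num
  have key13 : -(lor H₁ H₃) / Real.sqrt (lor H₁ H₁ * lor H₃ H₃) = 7/6 := by
    rw [h13, h11, h33]
    rw [show (-1 : ℝ) * -(36/49) = (6/7)^2 by norm_num,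
      Real.sqrt_sq (by norm_num : (0:ℝ) ≤ 6/7)]
    norm_num
  have key23 : -(lor H₂ H₃) / Real.sqrt (lor H₂ H₂ * lor H₃ H₃) = 7/6 := by
    rw [h23, h22, h33]
    rw [show (-(36/49) : ℝ) * -(36/49) = (36/49)^2 by norm_num,
      Real.sqrt_sq (by norm_num : (0:ℝ) ≤ 36/49)]
    norm_num
  have hd12 : d H₁ H₂ = arcosh' (7/6) := by simp only [d, key12]
  have hd13 : d H₁ H₃ = arcosh' (7/6) := by simp only [d, key13]
  have hd23 : d H₂ H₃ = arcosh' (7/6) := by simp only [d, key23]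
  have hx : (1 : ℝ) ≤ 7/6 := by norm_num
  have hcosh : Real.cosh (arcosh' (7/6 : ℝ)) = 7/6 := _root_.cosh_arcosh hx
  have hL : 2 * Real.sinh (arcosh' (7/6 : ℝ) / 2) = 1 / Real.sqrt 3 := by
    rw [sinh_half_arcosh hx]
    rw [show ((7:ℝ)/6 - 1) / 2 = 1 / 12 by norm_num]
    have s3 : Real.sqrt 3 ^ 2 = 3 := Real.sq_sqrt (by norm_num)
    have s3p : 0 < Real.sqrt 3 := Real.sqrt_pos.mpr (by norm_num)
    rw [show (1:ℝ)/12 = (1/(2*Real.sqrt 3))^2 by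
      rw [div_pow, mul_pow, s3]; norm_num]
    rw [Real.sqrt_sq (by positivity)]
    field_simp
  refine ⟨⟨?_, ?_, ?_⟩, ⟨?_, ?_, ?_⟩, ?_, ?_⟩
  · rw [hd12, hcosh]
  · rw [hd13, hcosh]
  · rw [hd23, hcosh]
  · simp only [L, hd12]; exact hL
  · simp only [L, hd13]; exact hL
  · simp only [L, hd23]; exact hL
  · unfold heronArea
    have : ((1/Real.sqrt 3 + 1/Real.sqrt 3 + 1/Real.sqrt 3) *
        (-(1/Real.sqrt 3) + 1/Real.sqrt 3 + 1/Real.sqrt 3) *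
        (1/Real.sqrt 3 - 1/Real.sqrt 3 + 1/Real.sqrt 3) *
        (1/Real.sqrt 3 + 1/Real.sqrt 3 - 1/Real.sqrt 3)) = (1/3 : ℝ) := by
      field_simp
      nlinarith [s3]
    rw [this]
    rw [show (1/3 : ℝ) = (Real.sqrt 3 / 3)^2 by
      rw [div_pow, s3]; norm_num]
    rw [Real.sqrt_sq (by positivity)]
    ring
  · rw [eq_div_iff (by positivity)]
    nlinarith [s3]
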